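/- arXiv:1701.05113 — 3 statements merged into one kernel-verified Lean document; each statement's English description precedes it below -/
import Mathlib

section
/- A vertex tree-shift X_{A_0,A_1} is uniformly strongly irreducible if and only if it is uniformly block gluing. -/
/-- Words over the binary alphabet Σ = {0,1}, encoded as lists of booleans
(0 ↦ `false`, 1 ↦ `true`).  Concatenation of words is list append. -/
abbrev Word : Type := List Bool

/-- An infinite tree over the alphabet `A`: a labeling of Σ* by `A`. -/
abbrev ITree (A : Type) : Type := Word → A

/-- The shift map σ_w, given by (σ_w t)(x) = t(wx). -/
def shiftW {A : Type} (w : Word) (t : ITree A) : ITree A := fun x => t (w ++ x)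

/-- A pattern: a support (set of nodes) together with labels.  Only the values
of `val` on `supp` are relevant. -/
structure Pattern (A : Type) where
  supp : Set Word
  val : Word → A

/-- The support of a pattern is prefix-closed. -/
def Pattern.PrefixClosed {A : Type} (u : Pattern A) : Prop :=
  ∀ x ∈ u.supp, ∀ y : Word, y <+: x → y ∈ u.supp

/-- A leaf of a pattern: a node of the support none of whose children lies in
the support. -/
def Pattern.IsLeaf {A : Type} (u : Pattern A) (w : Word) : Prop :=
  w ∈ u.supp ∧ ∀ i : Bool, w ++ [i] ∉ u.supp

/-- The pattern `u` is accepted by the tree `t` (rooted at some node `x`). -/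
def AcceptedBy {A : Type} (u : Pattern A) (t : ITree A) : Prop :=
  ∃ x : Word, ∀ y ∈ u.supp, u.val y = t (x ++ y)

/-- The pattern `u` is accepted by some tree of `X`. -/
def AcceptedIn {A : Type} (X : Set (ITree A)) (u : Pattern A) : Prop :=
  ∃ t ∈ X, AcceptedBy u t

/-- The set of trees avoiding every pattern of the forbidden set `F`. -/
def treeShiftOf {A : Type} (F : Set (Pattern A)) : Set (ITree A) :=
  { t | ∀ u ∈ F, ¬ AcceptedBy u t }

/-- A tree-shift: a set of trees of the form `X_F` for a set `F` of finite
(prefix-closed) patterns. -/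
def IsTreeShift {A : Type} (X : Set (ITree A)) : Prop :=
  ∃ F : Set (Pattern A), (∀ u ∈ F, u.supp.Finite ∧ u.PrefixClosed) ∧ X = treeShiftOf F

/-- A complete prefix code: a finite set of nonempty words, none a prefix of
another, such that every word of length ≥ max{|p| : p ∈ P} has a prefix in P. -/
def IsCPC (P : Finset Word) : Prop :=
  ([] : Word) ∉ P ∧
  (∀ p ∈ P, ∀ q ∈ P, p <+: q → p = q) ∧
  (∀ x : Word, P.sup List.length ≤ x.length → ∃ p ∈ P, p <+: x)

/-- Σ^k, the set of all words of length k, as a finite set. -/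
def fullCode (k : ℕ) : Finset Word :=
  Finset.image (fun f : Fin k → Bool => List.ofFn f) Finset.univ

/-- Σ_{n-1}: the set of all words of length < n (i.e. length ≤ n-1). -/
def sigmaLt (n : ℕ) : Set Word := { x : Word | x.length < n }

/-- An n-block of `X`: a pattern with support Σ_{n-1} accepted by some tree of `X`. -/
def IsNBlock {A : Type} (X : Set (ITree A)) (n : ℕ) (u : Pattern A) : Prop :=
  u.supp = sigmaLt n ∧ AcceptedIn X u

/-- A (finite, prefix-closed) pattern accepted by some tree of `X`. -/
def GoodPattern {A : Type} (X : Set (ITree A)) (u : Pattern A) : Prop :=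
  u.supp.Finite ∧ u.PrefixClosed ∧ AcceptedIn X u

/-- Patterns `u`, `v` are connected through `P` in `X`: there is `t ∈ X`
agreeing with `u` on its support and with a copy of `v` rooted at `wx` for
every leaf `w` of `u` and every `x ∈ P`. -/
def ConnectedThrough {A : Type} (X : Set (ITree A)) (P : Finset Word) (u v : Pattern A) : Prop :=
  ∃ t ∈ X, (∀ y ∈ u.supp, t y = u.val y) ∧
    ∀ w : Word, u.IsLeaf w → ∀ x ∈ P, ∀ y ∈ v.supp, t (w ++ x ++ y) = v.val y

/-- Block gluing: a single CPC connects any two n-blocks, for every n. -/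
def BlockGluing {A : Type} (X : Set (ITree A)) : Prop :=
  ∃ P : Finset Word, IsCPC P ∧ ∀ n : ℕ, ∀ u v : Pattern A,
    IsNBlock X n u → IsNBlock X n v → ConnectedThrough X P u v

/-- Uniformly block gluing: the CPC can be taken of the form Σ^k. -/
def UniformlyBlockGluing {A : Type} (X : Set (ITree A)) : Prop :=
  ∃ k : ℕ, IsCPC (fullCode k) ∧ ∀ n : ℕ, ∀ u v : Pattern A,
    IsNBlock X n u → IsNBlock X n v → ConnectedThrough X (fullCode k) u v

/-- Strongly irreducible: a single CPC connects any two accepted patterns. -/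
def StronglyIrreducible {A : Type} (X : Set (ITree A)) : Prop :=
  ∃ P : Finset Word, IsCPC P ∧ ∀ u v : Pattern A,
    GoodPattern X u → GoodPattern X v → ConnectedThrough X P u v

/-- Uniformly strongly irreducible: the CPC can be taken of the form Σ^k. -/
def UniformlyStronglyIrreducible {A : Type} (X : Set (ITree A)) : Prop :=
  ∃ k : ℕ, IsCPC (fullCode k) ∧ ∀ u v : Pattern A,
    GoodPattern X u → GoodPattern X v → ConnectedThrough X (fullCode k) u v

/-- A leaf of a set of nodes. -/
def SetLeaf (L : Set Word) (w : Word) : Prop := w ∈ L ∧ ∀ i : Bool, w ++ [i] ∉ L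

/-- Topological mixing. -/
def TopologicallyMixing {A : Type} (X : Set (ITree A)) : Prop :=
  ∀ L1 L2 : Set Word, L1.Finite → L2.Finite →
    (∀ x ∈ L1, ∀ y : Word, y <+: x → y ∈ L1) →
    (∀ x ∈ L2, ∀ y : Word, y <+: x → y ∈ L2) →
    ∃ P : Finset Word, IsCPC P ∧ ∀ t1 ∈ X, ∀ t2 ∈ X, ∃ t ∈ X,
      (∀ y ∈ L1, t y = t1 y) ∧
      ∀ w : Word, SetLeaf L1 w → ∀ x ∈ P, ∀ y ∈ L2, t (w ++ x ++ y) = t2 y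

/-- The vertex tree-shift of the pair of 0-1 matrices `A0`, `A1`. -/
def vertexShift {A : Type} (A0 A1 : A → A → Bool) : Set (ITree A) :=
  { t | ∀ x : Word,
      A0 (t x) (t (x ++ [false])) = true ∧ A1 (t x) (t (x ++ [true])) = true }

/-- The n-blocks of `X`, realized as labelings of Σ_{n-1}; used for counting
`|B_n(X)|`. -/
def blockFuns {A : Type} (X : Set (ITree A)) (n : ℕ) :
    Set ({ x : Word // x.length < n } → A) :=
  { f | ∃ t ∈ X, ∃ r : Word, ∀ y : { x : Word // x.length < n }, f y = t (r ++ y.val) }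

section Aux

variable {A : Type}

lemma mem_fullCode {x : Word} {k : ℕ} : x ∈ fullCode k ↔ x.length = k := by
  constructor
  · rintro hx
    simp only [fullCode, Finset.mem_image] at hx
    obtain ⟨f, -, rfl⟩ := hx
    simp
  · rintro rfl
    simp only [fullCode, Finset.mem_image]
    exact ⟨x.get, Finset.mem_univ _, List.ofFn_get x⟩

lemma fullCode_pos {k : ℕ} (h : IsCPC (fullCode k)) : 1 ≤ k := by
  rcases Nat.eq_zero_or_pos k with rfl | hk
  · exact absurd ((mem_fullCode (x := ([] : Word))).2 rfl) h.1
  · exact hk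

lemma shiftW_mem {A0 A1 : A → A → Bool} {t : ITree A} (ht : t ∈ vertexShift A0 A1)
    (w : Word) : shiftW w t ∈ vertexShift A0 A1 := by
  intro x
  simpa [shiftW, List.append_assoc] using ht (w ++ x)

/-- a leaf admits no proper extension in the support -/
lemma leaf_prefix_eq {u : Pattern A} (hpc : u.PrefixClosed) {w w' : Word}
    (hw : u.IsLeaf w) (hw' : w' ∈ u.supp) (h : w <+: w') : w = w' := by
  by_contra hne
  obtain ⟨r, rfl⟩ := h
  rcases r with _ | ⟨i, r⟩
  · simp at hne
  · exact hw.2 i (hpc _ hw' _ ⟨r, by simp⟩)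

/-- the one-block of a letter appearing in `X` is a 1-block -/
lemma oneBlock_isNBlock {X : Set (ITree A)} {t : ITree A} (ht : t ∈ X) :
    IsNBlock X 1 ⟨sigmaLt 1, fun _ => t []⟩ := by
  refine ⟨rfl, t, ht, [], ?_⟩
  intro y hy
  simp only [sigmaLt, Set.mem_setOf_eq, Nat.lt_one_iff, List.length_eq_zero_iff] at hy
  subst hy; rfl

/-- Key lemma: from 1-block gluing plus the Markov (vertex-shift) property,
one can put a copy of any accepted pattern at all positions of Σ^k below a
root with prescribed letter. -/
lemma key_lemma {A0 A1 : A → A → Bool} {k : ℕ} (hk : 1 ≤ k)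
    (hglue : ∀ n : ℕ, ∀ u v : Pattern A,
      IsNBlock (vertexShift A0 A1) n u → IsNBlock (vertexShift A0 A1) n v →
      ConnectedThrough (vertexShift A0 A1) (fullCode k) u v)
    (ta : ITree A) (hta : ta ∈ vertexShift A0 A1)
    (tv : ITree A) (htv : tv ∈ vertexShift A0 A1) :
    ∃ s ∈ vertexShift A0 A1, s [] = ta [] ∧
      ∀ x : Word, x.length = k → ∀ y : Word, s (x ++ y) = tv y := by
  obtain ⟨s1, hs1X, hs1u, hs1v⟩ :=
    hglue 1 _ _ (oneBlock_isNBlock hta) (oneBlock_isNBlock htv)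
  have hroot : s1 [] = ta [] := hs1u [] (by simp [sigmaLt])
  have hleaf : (⟨sigmaLt 1, fun _ => ta []⟩ : Pattern A).IsLeaf [] := by
    constructor
    · simp [sigmaLt]
    · intro i; simp [sigmaLt]
  have hcopies : ∀ x : Word, x.length = k → s1 x = tv [] := by
    intro x hx
    have := hs1v [] hleaf x (mem_fullCode.2 hx) [] (by simp [sigmaLt])
    simpa using this
  set s : ITree A := fun z => if z.length < k then s1 z else tv (z.drop k) with hs
  have hev1 : ∀ z : Word, z.length < k → s z = s1 z := by
    intro z hz; simp [hs, hz]
  have hev2 : ∀ z : Word, k ≤ z.length → s z = tv (z.drop k) := by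
    intro z hz; simp [hs, Nat.not_lt.2 hz]
  refine ⟨s, ?_, ?_, ?_⟩
  · intro z
    have key : ∀ i : Bool,
        (bif i then A1 else A0) (s z) (s (z ++ [i])) = true := by
      intro i
      rcases Nat.lt_or_ge (z.length + 1) k with h1 | h1
      · rw [hev1 z (Nat.lt_of_succ_lt h1), hev1 (z ++ [i]) (by simpa using h1)]
        cases i
        · exact (hs1X z).1
        · exact (hs1X z).2
      · have h2 : (z ++ [i]).length = z.length + 1 := by simp
        rcases Nat.lt_or_ge z.length k with h0 | h0
        · -- boundary
          have hk1 : z.length + 1 = k := le_antisymm h0 h1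
          rw [hev1 z h0, hev2 (z ++ [i]) (by omega)]
          have : (z ++ [i]).drop k = ([] : Word) :=
            List.drop_eq_nil_of_le (by omega)
          rw [this, ← hcopies (z ++ [i]) (by omega)]
          cases i
          · exact (hs1X z).1
          · exact (hs1X z).2
        · -- deep
          rw [hev2 z h0, hev2 (z ++ [i]) (by omega)]
          rw [List.drop_append_of_le_length h0]
          cases i
          · exact (htv (z.drop k)).1
          · exact (htv (z.drop k)).2
    exact ⟨key false, key true⟩
  · rw [hev1 [] (by simp; omega)]; exact hroot
  · intro x hx y
    rw [hev2 (x ++ y) (by simp [hx])]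
    congr 1
    rw [← hx]; exact List.drop_left

lemma mem_vertexShift_iff {A0 A1 : A → A → Bool} {t : ITree A} :
    t ∈ vertexShift A0 A1 ↔
      ∀ z : Word, ∀ i : Bool, (bif i then A1 else A0) (t z) (t (z ++ [i])) = true := by
  constructor
  · intro h z i
    cases i
    · exact (h z).1
    · exact (h z).2
  · intro h z
    exact ⟨h z false, h z true⟩

end Aux

/-- a vertex tree-shift is uniformly strongly irreducible iff it
is uniformly block gluing. -/
theorem stmt7 {A : Type} [Fintype A] (A0 A1 : A → A → Bool) :
    UniformlyStronglyIrreducible (vertexShift A0 A1) ↔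
      UniformlyBlockGluing (vertexShift A0 A1) := by
  constructor
  · -- USI → UBG : n-blocks are good patterns
    rintro ⟨k, hcpc, h⟩
    refine ⟨k, hcpc, fun n u v hu hv => ?_⟩
    have good : ∀ p : Pattern A, IsNBlock (vertexShift A0 A1) n p →
        GoodPattern (vertexShift A0 A1) p := by
      rintro p ⟨hsupp, hacc⟩
      refine ⟨?_, ?_, hacc⟩
      · rw [hsupp]; exact List.finite_length_lt Bool n
      · intro x hx y hy
        rw [hsupp] at hx ⊢
        exact lt_of_le_of_lt hy.length_le hx
    exact h u v (good u hu) (good v hv)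
  · -- UBG → USI
    rintro ⟨k, hcpc, hglue⟩
    have hk1 : 1 ≤ k := fullCode_pos hcpc
    refine ⟨k, hcpc, fun u v hu hv => ?_⟩
    obtain ⟨hufin, hupc, tu0, htu0X, xu, haccu⟩ := hu
    obtain ⟨hvfin, hvpc, tv0, htv0X, xv, haccv⟩ := hv
    set Tu : ITree A := shiftW xu tu0 with hTudef
    set Tv : ITree A := shiftW xv tv0 with hTvdef
    have hTuX : Tu ∈ vertexShift A0 A1 := shiftW_mem htu0X xu
    have hTvX : Tv ∈ vertexShift A0 A1 := shiftW_mem htv0X xv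
    have hTu : ∀ y ∈ u.supp, Tu y = u.val y := fun y hy => (haccu y hy).symm
    have hTv : ∀ y ∈ v.supp, Tv y = v.val y := fun y hy => (haccv y hy).symm
    -- choose a gluing tree below every node
    have hS : ∀ w : Word, ∃ s, s ∈ vertexShift A0 A1 ∧ s [] = Tu w ∧
        ∀ x : Word, x.length = k → ∀ y : Word, s (x ++ y) = Tv y := by
      intro w
      obtain ⟨s, h1, h2, h3⟩ :=
        key_lemma hk1 hglue (shiftW w Tu) (shiftW_mem hTuX w) Tv hTvX
      exact ⟨s, h1, by simpa [shiftW] using h2, h3⟩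
    choose S hSX hSroot hScopy using hS
    classical
    set t : ITree A := fun z =>
      if h : ∃ w, u.IsLeaf w ∧ w <+: z ∧ w.length < z.length
      then S h.choose (z.drop h.choose.length) else Tu z with htdef
    -- evaluation lemmas
    have hOut : ∀ z : Word,
        ¬ (∃ w, u.IsLeaf w ∧ w <+: z ∧ w.length < z.length) → t z = Tu z := by
      intro z hz; simp only [htdef, dif_neg hz]
    have hIn : ∀ z w : Word, u.IsLeaf w → w <+: z → w.length < z.length →
        t z = S w (z.drop w.length) := by
      intro z w hw hpre hlen
      have hex : ∃ w, u.IsLeaf w ∧ w <+: z ∧ w.length < z.length := ⟨w, hw, hpre, hlen⟩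
      have hspec := hex.choose_spec
      have hcw : hex.choose = w := by
        rcases List.prefix_or_prefix_of_prefix hspec.2.1 hpre with h | h
        · exact leaf_prefix_eq hupc hspec.1 hw.1 h
        · exact (leaf_prefix_eq hupc hw hspec.1.1 h).symm
      simp only [htdef, dif_pos hex, hcw]
    -- a leaf has no proper leaf prefix
    have hLeafOut : ∀ w : Word, w ∈ u.supp →
        ¬ (∃ w', u.IsLeaf w' ∧ w' <+: w ∧ w'.length < w.length) := by
      rintro w hwsupp ⟨w', hw', hpre', hlen'⟩
      rw [leaf_prefix_eq hupc hw' hwsupp hpre'] at hlen'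
      omega
    refine ⟨t, ?_, ?_, ?_⟩
    · -- t belongs to the shift
      rw [mem_vertexShift_iff]
      intro z i
      by_cases hch : ∃ w, u.IsLeaf w ∧ w <+: z ++ [i] ∧ w.length < (z ++ [i]).length
      · obtain ⟨w, hw, hpre, hlen⟩ := hch
        have hlen1 : (z ++ [i]).length = z.length + 1 := by simp
        have hwz : w <+: z := by
          rcases List.prefix_or_prefix_of_prefix hpre (List.prefix_append z [i])
            with h | h
          · exact h
          · have : z = w := h.eq_of_length_le (by omega)
            exact this ▸ List.prefix_rfl
        have hwlen : w.length ≤ z.length := hwz.length_le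
        rcases Nat.lt_or_ge w.length z.length with hlt | hge
        · -- w properly below z
          have e1 : t z = S w (z.drop w.length) := hIn z w hw hwz hlt
          have e2 : t (z ++ [i]) = S w (z.drop w.length ++ [i]) := by
            have h3 : w.length < (z ++ [i]).length := by omega
            rw [hIn (z ++ [i]) w hw (hwz.trans (List.prefix_append z [i])) h3]
            rw [List.drop_append_of_le_length (le_of_lt hlt)]
          rw [e1, e2]
          exact mem_vertexShift_iff.1 (hSX w) (z.drop w.length) i
        · -- w = z : z is a leaf
          have hwz' : w = z := hwz.eq_of_length_le hge
          subst hwz'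
          have e1 : t w = S w [] := by
            rw [hOut w (hLeafOut w hw.1)]
            exact (hSroot w).symm
          have e2 : t (w ++ [i]) = S w [i] := by
            have h3 : w.length < (w ++ [i]).length := by simp
            rw [hIn (w ++ [i]) w hw (List.prefix_append w [i]) h3]
            congr 1
            exact List.drop_left
          rw [e1, e2]
          have := mem_vertexShift_iff.1 (hSX w) [] i
          simpa using this
      · -- no leaf region at all
        have hz : ¬ (∃ w, u.IsLeaf w ∧ w <+: z ∧ w.length < z.length) := by
          rintro ⟨w, hw, hpre, hlen⟩
          refine hch ⟨w, hw, hpre.trans (List.prefix_append z [i]), ?_⟩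
          have : (z ++ [i]).length = z.length + 1 := by simp
          omega
        rw [hOut z hz, hOut (z ++ [i]) hch]
        exact mem_vertexShift_iff.1 hTuX z i
    · -- agrees with u
      intro y hy
      rw [hOut y (hLeafOut y hy)]
      exact hTu y hy
    · -- copies of v
      intro w hw x hx y hy
      have hxk : x.length = k := mem_fullCode.1 hx
      have hpre : w <+: w ++ x ++ y := ⟨x ++ y, by simp⟩
      have hlen : w.length < (w ++ x ++ y).length := by
        simp only [List.length_append]
        omega
      rw [hIn (w ++ x ++ y) w hw hpre hlen]
      rw [show (w ++ x ++ y).drop w.length = x ++ y from by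
        rw [List.append_assoc]
        exact List.drop_left]
      rw [hScopy w x hxk y]
      exact hTv y hy
end

section
/- There exists a block gluing tree-shift that is not strongly irreducible, and there exists a uniformly block gluing tree-shift that is not uniformly strongly irreducible. -/
/-- The depth-function tree-shift: labels depend only on the depth. -/
def depthShift : Set (ITree Bool) :=
  { t | ∀ x y : Word, x.length = y.length → t x = t y }

lemma depthShift_isTreeShift : IsTreeShift depthShift := by
  refine ⟨{ u : Pattern Bool | (∃ n, u.supp = sigmaLt n) ∧
      ∃ x y, x ∈ u.supp ∧ y ∈ u.supp ∧ x.length = y.length ∧ u.val x ≠ u.val y }, ?_, ?_⟩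
  · rintro u ⟨⟨n, hs⟩, -⟩
    constructor
    · rw [hs]; exact List.finite_length_lt Bool n
    · intro x hx y hy
      rw [hs] at hx ⊢
      exact lt_of_le_of_lt hy.length_le hx
  · ext t
    constructor
    · rintro ht u ⟨⟨n, hs⟩, x, y, hx, hy, hl, hne⟩ ⟨r, hr⟩
      exact hne (by rw [hr x hx, hr y hy]; exact ht _ _ (by simp [hl]))
    · intro ht x y hxy
      by_contra hne
      exact ht ⟨sigmaLt (x.length + 1), t⟩
        ⟨⟨x.length + 1, rfl⟩, x, y, Nat.lt_succ_self _,
          by simp [sigmaLt, ← hxy], hxy, hne⟩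
        ⟨[], fun y _ => by simp⟩

lemma mem_fullCode_one (a : Bool) : [a] ∈ fullCode 1 :=
  Finset.mem_image.mpr ⟨fun _ => a, Finset.mem_univ _, by simp⟩

lemma length_of_mem_fullCode {k : ℕ} {p : Word} (hp : p ∈ fullCode k) : p.length = k := by
  obtain ⟨f, -, rfl⟩ := Finset.mem_image.mp hp
  simp

lemma cpc_one : IsCPC (fullCode 1) := by
  refine ⟨?_, ?_, ?_⟩
  · intro h
    have := length_of_mem_fullCode h
    simp at this
  · intro p hp q hq hpq
    exact hpq.eq_of_length (by rw [length_of_mem_fullCode hp, length_of_mem_fullCode hq])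
  · intro x hx
    match x with
    | [] =>
      exfalso
      have h1 : (1 : ℕ) ≤ (fullCode 1).sup List.length := by
        have := Finset.le_sup (f := List.length) (mem_fullCode_one false)
        simpa using this
      have h0 : (fullCode 1).sup List.length ≤ 0 := by simpa using hx
      omega
    | a :: x' => exact ⟨[a], mem_fullCode_one a, ⟨x', rfl⟩⟩

/-- In an accepted block of the depth shift, values depend only on depth. -/
lemma block_val_depth {n : ℕ} {u : Pattern Bool} (hu : IsNBlock depthShift n u)
    {y : Word} (hy : y.length < n) :
    u.val y = u.val (List.replicate y.length false) := by
  obtain ⟨hs, t, ht, r, hr⟩ := hu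
  have hy' : y ∈ u.supp := by rw [hs]; exact hy
  have hz' : List.replicate y.length false ∈ u.supp := by
    rw [hs]; simpa [sigmaLt] using hy
  rw [hr y hy', hr _ hz']
  exact ht _ _ (by simp)

lemma depthShift_glue : ∀ n : ℕ, ∀ u v : Pattern Bool,
    IsNBlock depthShift n u → IsNBlock depthShift n v →
    ConnectedThrough depthShift (fullCode 1) u v := by
  intro n u v hu hv
  refine ⟨fun z => if z.length < n then u.val (List.replicate z.length false)
      else v.val (List.replicate (z.length - n) false), ?_, ?_, ?_⟩
  · intro x y hxy
    simp only [hxy]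
  · intro y hy
    have hy' : y.length < n := by rw [hu.1] at hy; exact hy
    show (if y.length < n then u.val (List.replicate y.length false)
      else v.val (List.replicate (y.length - n) false)) = u.val y
    rw [if_pos hy']
    exact (block_val_depth hu hy').symm
  · intro w hw x hx y hy
    have hw1 : w.length < n := by have := hw.1; rwa [hu.1] at this
    have hw2 : ¬ (w.length + 1 < n) := by
      intro h
      exact hw.2 false (by rw [hu.1]; simpa [sigmaLt] using h)
    have hx1 : x.length = 1 := length_of_mem_fullCode hx
    have hy1 : y.length < n := by rwa [hv.1] at hy
    have hlen : (w ++ x ++ y).length = n + y.length := by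
      simp [hx1]; omega
    show (if (w ++ x ++ y).length < n then u.val (List.replicate (w ++ x ++ y).length false)
      else v.val (List.replicate ((w ++ x ++ y).length - n) false)) = v.val y
    rw [hlen, if_neg (by omega : ¬ n + y.length < n)]
    have h2 : n + y.length - n = y.length := by omega
    rw [h2]
    exact (block_val_depth hv hy1).symm

/-- The small pattern with leaves at two different depths. -/
def uBad : Pattern Bool :=
  ⟨{[], [false], [true], [false, false]}, fun _ => false⟩

/-- The 2-block with different values at depths 0 and 1. -/
def vBad : Pattern Bool :=
  ⟨sigmaLt 2, fun y => decide (y.length = 1)⟩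

lemma prefix_two {y : Word} {a b : Bool} (h : y <+: [a, b]) :
    y = [] ∨ y = [a] ∨ y = [a, b] := by
  obtain ⟨s, hs⟩ := h
  match y with
  | [] => exact Or.inl rfl
  | [c] =>
    simp at hs
    exact Or.inr (Or.inl (by rw [hs.1]))
  | [c, d] =>
    simp at hs
    exact Or.inr (Or.inr (by rw [hs.1, hs.2.1]))
  | c :: d :: e :: y' => simp at hs

lemma prefix_one {y : Word} {a : Bool} (h : y <+: [a]) : y = [] ∨ y = [a] := by
  obtain ⟨s, hs⟩ := h
  match y with
  | [] => exact Or.inl rfl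
  | [c] => simp at hs; exact Or.inr (by rw [hs.1])
  | c :: d :: y' => simp at hs

lemma uBad_good : GoodPattern depthShift uBad := by
  refine ⟨?_, ?_, ?_⟩
  · exact (Set.finite_singleton _).insert _ |>.insert _ |>.insert _
  · intro x hx y hy
    simp only [uBad, Set.mem_insert_iff, Set.mem_singleton_iff] at hx ⊢
    rcases hx with rfl | rfl | rfl | rfl
    · left; exact List.prefix_nil.mp hy
    · rcases prefix_one hy with rfl | rfl
      · left; rfl
      · right; left; rfl
    · rcases prefix_one hy with rfl | rfl
      · left; rfl
      · right; right; left; rfl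
    · rcases prefix_two hy with rfl | rfl | rfl
      · left; rfl
      · right; left; rfl
      · right; right; right; rfl
  · exact ⟨fun _ => false, fun _ _ _ => rfl, [], fun y _ => rfl⟩

lemma vBad_good : GoodPattern depthShift vBad := by
  refine ⟨List.finite_length_lt Bool 2, ?_, ?_⟩
  · intro x hx y hy
    exact lt_of_le_of_lt hy.length_le hx
  · refine ⟨fun x => decide (x.length = 1), fun x y h => by simp [h], [], fun y _ => by simp [vBad]⟩

lemma uBad_leaf_one : uBad.IsLeaf [true] := by
  constructor
  · simp [uBad]
  · intro i
    simp [uBad]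

lemma uBad_leaf_two : uBad.IsLeaf [false, false] := by
  constructor
  · simp [uBad]
  · intro i
    simp [uBad]

lemma not_connected_bad {P : Finset Word} {p : Word} (hp : p ∈ P) :
    ¬ ConnectedThrough depthShift P uBad vBad := by
  rintro ⟨t, ht, -, hleaf⟩
  have h1 : t ([true] ++ p ++ [false]) = true := by
    have := hleaf [true] uBad_leaf_one p hp [false] (by simp [vBad, sigmaLt])
    simpa [vBad] using this
  have h2 : t ([false, false] ++ p ++ []) = false := by
    have := hleaf [false, false] uBad_leaf_two p hp [] (by simp [vBad, sigmaLt])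
    simpa [vBad] using this
  have := ht ([true] ++ p ++ [false]) ([false, false] ++ p ++ []) (by simp)
  rw [h1, h2] at this
  exact absurd this (by simp)

theorem stmt13' :
    (∃ X : Set (ITree Bool), IsTreeShift X ∧ BlockGluing X ∧
        ¬ StronglyIrreducible X) ∧
    (∃ X : Set (ITree Bool), IsTreeShift X ∧ UniformlyBlockGluing X ∧
        ¬ UniformlyStronglyIrreducible X) := by
  constructor
  · refine ⟨depthShift, depthShift_isTreeShift, ⟨fullCode 1, cpc_one, depthShift_glue⟩, ?_⟩
    rintro ⟨P, hP, hconn⟩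
    obtain ⟨p, hp, -⟩ := hP.2.2 (List.replicate (P.sup List.length) false) (by simp)
    exact not_connected_bad hp (hconn uBad vBad uBad_good vBad_good)
  · refine ⟨depthShift, depthShift_isTreeShift, ⟨1, cpc_one, depthShift_glue⟩, ?_⟩
    rintro ⟨k, hP, hconn⟩
    have hp : List.ofFn (fun _ : Fin k => false) ∈ fullCode k :=
      Finset.mem_image.mpr ⟨_, Finset.mem_univ _, rfl⟩
    exact not_connected_bad hp (hconn uBad vBad uBad_good vBad_good)

/-- there is a block gluing tree-shift that is not strongly
irreducible, and a uniformly block gluing tree-shift that is not uniformly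
strongly irreducible. -/
theorem stmt13 :
    (∃ X : Set (ITree Bool), IsTreeShift X ∧ BlockGluing X ∧
        ¬ StronglyIrreducible X) ∧
    (∃ X : Set (ITree Bool), IsTreeShift X ∧ UniformlyBlockGluing X ∧
        ¬ UniformlyStronglyIrreducible X) := by
  exact stmt13'
end

section
/- The even tree-shift Y is a sofic tree-shift: it is the image of the simplified golden-mean tree-shift X under the sliding block code φ = Φ_∞ induced by the 2-block map Φ with Φ(u) = 0 if u = (0,0,0) and Φ(u) = 1 otherwise; that is, φ(X) = Y, where φ(t)(x) = Φ(t(x), t(x0), t(x1)) for every x ∈ Σ*. -/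
/-- Number of nodes labeled 1 along the path starting at `s` and descending
along the word `m` (both endpoints included). -/
def pathOnes (t : ITree Bool) (s m : Word) : ℕ :=
  ((Finset.range (m.length + 1)).filter fun j => t (s ++ m.take j) = true).card

/-- The even tree-shift: (1) along any path the number of 1's between two
consecutive 0's is even; (2) any two paths starting at a common node and
ending at nodes labeled 0 carry the same number of 1's modulo 2. -/
def evenShift : Set (ITree Bool) :=
  { t |
    (∀ s m : Word, m ≠ [] → t s = false → t (s ++ m) = false →
      (∀ j : ℕ, 0 < j → j < m.length → t (s ++ m.take j) = true) →
      Even (m.length - 1)) ∧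
    (∀ s m1 m2 : Word, t (s ++ m1) = false → t (s ++ m2) = false →
      pathOnes t s m1 % 2 = pathOnes t s m2 % 2) }

/-- The forbidden set of the simplified golden-mean tree-shift: 2-blocks u
(support Σ_1) with u(0) ≠ u(1) or u(ε) = u(0) = u(1) = 1. -/
def goldenF : Set (Pattern Bool) :=
  { u | u.supp = { x : Word | x.length ≤ 1 } ∧
        (u.val [false] ≠ u.val [true] ∨
          (u.val [] = true ∧ u.val [false] = true ∧ u.val [true] = true)) }


lemma pathOnes_nil (t : ITree Bool) (x : Word) :
    pathOnes t x [] = if t x = true then 1 else 0 := by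
  simp [pathOnes, Finset.filter_singleton, Finset.range_one]
  split <;> simp_all

lemma pathOnes_cons (t : ITree Bool) (x : Word) (i : Bool) (m : Word) :
    pathOnes t x (i :: m) = (if t x = true then 1 else 0) + pathOnes t (x ++ [i]) m := by
  classical
  unfold pathOnes
  simp only [List.length_cons]
  have h : (Finset.range (m.length + 1 + 1)) =
      insert 0 ((Finset.range (m.length + 1)).image (· + 1)) := by
    ext j; cases j <;> simp [Nat.succ_lt_succ_iff]
  rw [h, Finset.filter_insert]
  have himg : ((Finset.range (m.length + 1)).image (· + 1)).filter
        (fun j => t (x ++ (i :: m).take j) = true) =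
      ((Finset.range (m.length + 1)).filter
        (fun j => t ((x ++ [i]) ++ m.take j) = true)).image (· + 1) := by
    rw [Finset.filter_image]
    congr 1
    ext j
    rw [Finset.mem_filter]
    simp [List.append_assoc, Nat.lt_succ_iff]
  split
  · rw [Finset.card_insert_of_notMem (by simp), himg,
      Finset.card_image_of_injective _ (fun a b => by omega)]
    simp_all [add_comm]
  · rw [himg, Finset.card_image_of_injective _ (fun a b => by omega)]
    simp_all

lemma pathOnes_snoc (t : ITree Bool) (x : Word) (m : Word) (i : Bool) :
    pathOnes t x (m ++ [i]) = pathOnes t x m + (if t (x ++ m ++ [i]) = true then 1 else 0) := by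
  classical
  unfold pathOnes
  have hl : (m ++ [i]).length = m.length + 1 := by simp
  rw [hl, Finset.range_add_one, Finset.filter_insert]
  have hfix : ((Finset.range (m.length + 1)).filter
        fun j => t (x ++ (m ++ [i]).take j) = true) =
      ((Finset.range (m.length + 1)).filter fun j => t (x ++ m.take j) = true) := by
    apply Finset.filter_congr
    intro j hj
    simp only [Finset.mem_range] at hj
    rw [List.take_append_of_le_length (by omega)]
  rw [hfix]
  have htake : (m ++ [i]).take (m.length + 1) = m ++ [i] := by
    rw [List.take_of_length_le (by simp)]
  rw [htake, ← List.append_assoc]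
  split
  · rw [Finset.card_insert_of_notMem (by simp)]
  · rfl

/-- Membership criterion for the golden-mean tree-shift. -/
lemma memX_iff (t : ITree Bool) : t ∈ treeShiftOf goldenF ↔
    ∀ x : Word, t (x ++ [false]) = t (x ++ [true]) ∧
      ¬(t x = true ∧ t (x ++ [false]) = true) := by
  constructor
  · intro ht x
    by_contra hc
    apply ht ⟨{ y : Word | y.length ≤ 1 }, fun y => t (x ++ y)⟩
    · constructor
      · rfl
      · by_cases hs : t (x ++ [false]) = t (x ++ [true])
        · right
          push_neg at hc
          rcases hc hs with ⟨h1, h2⟩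
          exact ⟨by simpa using h1, h2, by show t (x ++ [true]) = true; rw [← hs]; exact h2⟩
        · left; exact hs
    · exact ⟨x, fun y _ => rfl⟩
  · intro h u hu hacc
    rcases hacc with ⟨x, hx⟩
    rcases hu with ⟨hsupp, hval⟩
    have h0 : u.val [] = t x := by
      have := hx [] (by rw [hsupp]; simp); simpa using this
    have hf : u.val [false] = t (x ++ [false]) := hx [false] (by rw [hsupp]; simp)
    have htr : u.val [true] = t (x ++ [true]) := hx [true] (by rw [hsupp]; simp)
    rcases h x with ⟨hsib, h11⟩
    rcases hval with h1 | h2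
    · exact h1 (by rw [hf, htr, hsib])
    · exact h11 ⟨by rw [← h0]; exact h2.1, by rw [← hf]; exact h2.2.1⟩

def phi (t : ITree Bool) : ITree Bool :=
  fun x => t x || t (x ++ [false]) || t (x ++ [true])

/-- Golden-mean property, pointwise form. -/
def GM (t : ITree Bool) : Prop :=
  ∀ x : Word, t (x ++ [false]) = t (x ++ [true]) ∧
    ¬(t x = true ∧ t (x ++ [false]) = true)

lemma phi_eq (t : ITree Bool) (ht : GM t) (x : Word) :
    phi t x = (t x || t (x ++ [false])) := by
  rcases ht x with ⟨hsib, -⟩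
  simp [phi, ← hsib, Bool.or_assoc]

lemma phi_false (t : ITree Bool) (ht : GM t) (x : Word)
    (h : phi t x = false) : t x = false ∧ t (x ++ [false]) = false := by
  rw [phi_eq t ht] at h
  simpa using h

lemma sib (t : ITree Bool) (ht : GM t) (x : Word) (i : Bool) :
    t (x ++ [i]) = t (x ++ [false]) := by
  cases i
  · rfl
  · exact ((ht x).1).symm

lemma phi_parity (t : ITree Bool) (ht : GM t) (x m : Word) :
    pathOnes (phi t) x m % 2 =
      ((if t x = true then 1 else 0) +
        (if t (x ++ m ++ [false]) = true then 1 else 0)) % 2 := by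
  induction m using List.reverseRecOn with
  | nil =>
    rw [pathOnes_nil, phi_eq t ht]
    rcases ht x with ⟨-, h11⟩
    simp only [List.append_nil]
    cases h1 : t x <;> cases h2 : t (x ++ [false]) <;> simp_all
  | append_singleton m i ih =>
    rw [pathOnes_snoc]
    have e1 : t (x ++ m ++ [i]) = t (x ++ m ++ [false]) := sib t ht (x ++ m) i
    have e2 : phi t (x ++ m ++ [i]) =
        (t (x ++ m ++ [i]) || t (x ++ m ++ [i] ++ [false])) := phi_eq t ht _
    have e3 : x ++ (m ++ [i]) ++ [false] = x ++ m ++ [i] ++ [false] := by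
      simp [List.append_assoc]
    rcases ht (x ++ m ++ [i]) with ⟨-, h11⟩
    rw [e3, e2, e1]
    have h11' : ¬(t (x ++ m ++ [false]) = true ∧ t (x ++ m ++ [i] ++ [false]) = true) := by
      rw [e1] at h11; exact h11
    cases htx : t x <;> cases hc : t (x ++ m ++ [false]) <;>
      cases hd : t (x ++ m ++ [i] ++ [false]) <;>
      simp only [htx, hc, hd, Bool.or_true, Bool.true_or, Bool.or_false, Bool.false_or,
        Bool.or_self, Bool.false_eq_true, if_false, if_true, ite_false, ite_true]
        at ih ⊢ <;>
      first
        | omega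
        | exact absurd ⟨hc, hd⟩ h11'

lemma run_even (t : ITree Bool) (ht : GM t) (x m : Word) (hm : m ≠ [])
    (h0 : phi t x = false) (h1 : phi t (x ++ m) = false)
    (hmid : ∀ j : ℕ, 0 < j → j < m.length → phi t (x ++ m.take j) = true) :
    Even (m.length - 1) := by
  have key : ∀ j, 1 ≤ j → j ≤ m.length →
      (t (x ++ m.take j) = true ↔ (j - 1) % 2 = 1) := by
    intro j
    induction j with
    | zero => intro h; omega
    | succ j ihj =>
      intro _ hle
      by_cases hj : j = 0
      · subst hj
        obtain ⟨i, m', rfl⟩ := List.exists_cons_of_ne_nil hm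
        have : t (x ++ [i]) = false := by
          rw [sib t ht x i]
          exact (phi_false t ht x h0).2
        simp [List.take_cons, this]
      · have hj1 : 1 ≤ j := by omega
        have hjlt : j < m.length := by omega
        have ih := ihj hj1 (by omega)
        have hphij := hmid j (by omega) hjlt
        rw [phi_eq t ht] at hphij
        have htake : m.take (j + 1) = m.take j ++ [m[j]] := by
          rw [List.take_succ, List.getElem?_eq_getElem hjlt]
          rfl
        have e4 : t (x ++ m.take (j + 1)) = t ((x ++ m.take j) ++ [false]) := by
          rw [htake, ← List.append_assoc]
          exact sib t ht (x ++ m.take j) _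
        rcases ht (x ++ m.take j) with ⟨-, h11⟩
        rw [e4]
        cases hc : t (x ++ m.take j) <;> cases hd : t ((x ++ m.take j) ++ [false])
        · rw [hc, hd] at hphij; simp at hphij
        · rw [hc] at ih
          simp only [Nat.add_sub_cancel]
          simp at ih
          constructor
          · intro _; omega
          · intro _; trivial
        · rw [hc] at ih
          simp only [Nat.add_sub_cancel]
          simp at ih ⊢
          omega
        · exact absurd ⟨hc, hd⟩ h11
  have hn : 1 ≤ m.length := by
    cases m
    · exact absurd rfl hm
    · simp
  have hend : t (x ++ m.take m.length) = false := by
    rw [List.take_length]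
    exact (phi_false t ht _ h1).1
  have := key m.length hn le_rfl
  rw [hend] at this
  simp at this
  rw [Nat.even_iff]
  omega

lemma phi_cond2 (t : ITree Bool) (ht : GM t) (x m1 m2 : Word)
    (h1 : phi t (x ++ m1) = false) (h2 : phi t (x ++ m2) = false) :
    pathOnes (phi t) x m1 % 2 = pathOnes (phi t) x m2 % 2 := by
  rw [phi_parity t ht x m1, phi_parity t ht x m2,
    show x ++ m1 ++ [false] = (x ++ m1) ++ [false] from rfl,
    (phi_false t ht _ h1).2, (phi_false t ht _ h2).2]

open Classical in
noncomputable def preAux (s : ITree Bool) : Word → Bool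
  | [] => if ∃ m, s m = false ∧ pathOnes s [] m % 2 = 1 then true else false
  | _ :: r => s r.reverse && !(preAux s r)

noncomputable def preT (s : ITree Bool) (x : Word) : Bool := preAux s x.reverse

open Classical in
lemma preT_nil_iff (s : ITree Bool) :
    preT s [] = true ↔ ∃ m, s m = false ∧ pathOnes s [] m % 2 = 1 := by
  show preAux s [] = true ↔ _
  unfold preAux
  split <;> simp_all

lemma preT_snoc (s : ITree Bool) (x : Word) (i : Bool) :
    preT s (x ++ [i]) = (s x && !(preT s x)) := by
  unfold preT
  rw [List.reverse_append]
  simp [preAux]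

lemma preT_spec (s : ITree Bool)
    (hs2 : ∀ x m1 m2 : Word, s (x ++ m1) = false → s (x ++ m2) = false →
      pathOnes s x m1 % 2 = pathOnes s x m2 % 2) :
    ∀ x m : Word, s (x ++ m) = false → (preT s x = true ↔ pathOnes s x m % 2 = 1) := by
  intro x
  induction x using List.reverseRecOn with
  | nil =>
    intro m hm
    rw [preT_nil_iff]
    constructor
    · rintro ⟨m', hm', hp'⟩
      have := hs2 [] m m' (by simpa using hm) (by simpa using hm')
      omega
    · intro h
      exact ⟨m, by simpa using hm, h⟩
  | append_singleton x i ihx =>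
    intro m hm
    have hm' : s (x ++ (i :: m)) = false := by
      rw [show x ++ (i :: m) = (x ++ [i]) ++ m by simp]
      exact hm
    have h1 := ihx (i :: m) hm'
    rw [pathOnes_cons] at h1
    rw [preT_snoc]
    cases hsx : s x
    · have h0 := ihx [] (by simpa using hsx)
      rw [pathOnes_nil, hsx] at h0
      simp only [hsx] at h1 ⊢
      simp only [if_neg (by simp : ¬(false = true))] at h0 h1
      have hpx : preT s x = false := by
        cases hp : preT s x
        · rfl
        · exact absurd (h0.1 hp) (by omega)
      rw [hpx] at h1
      simp only [Bool.false_and]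
      constructor
      · intro h; exact absurd h (by simp)
      · intro h
        exact absurd (h1.2 (by omega)) (by simp)
    · simp only [hsx, if_pos rfl, Bool.true_and] at h1 ⊢
      cases hp : preT s x
      · rw [hp] at h1
        simp only [Bool.not_false]
        simp at h1
        constructor
        · intro _; omega
        · intro _; trivial
      · rw [hp] at h1
        simp only [Bool.not_true]
        simp at h1
        constructor
        · intro h; exact absurd h (by simp)
        · intro h; omega

lemma preT_GM (s : ITree Bool) : GM (preT s) := by
  intro x
  constructor
  · rw [preT_snoc, preT_snoc]
  · rintro ⟨h1, h2⟩
    rw [preT_snoc, h1] at h2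
    simp at h2

lemma phi_preT (s : ITree Bool)
    (hs2 : ∀ x m1 m2 : Word, s (x ++ m1) = false → s (x ++ m2) = false →
      pathOnes s x m1 % 2 = pathOnes s x m2 % 2) :
    phi (preT s) = s := by
  funext x
  rw [phi_eq _ (preT_GM s), preT_snoc]
  cases hp : preT s x
  · simp
  · have hsx : s x = true := by
      by_contra hc
      have h := (preT_spec s hs2 x [] (by simpa using (Bool.not_eq_true _).mp hc)).1 hp
      rw [pathOnes_nil, (Bool.not_eq_true _).mp hc] at h
      simp at h
    simp [hsx]

lemma mem_evenShift {s : ITree Bool} : s ∈ evenShift ↔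
    ((∀ x m : Word, m ≠ [] → s x = false → s (x ++ m) = false →
      (∀ j : ℕ, 0 < j → j < m.length → s (x ++ m.take j) = true) →
      Even (m.length - 1)) ∧
    (∀ x m1 m2 : Word, s (x ++ m1) = false → s (x ++ m2) = false →
      pathOnes s x m1 % 2 = pathOnes s x m2 % 2)) := Iff.rfl

/-- the even tree-shift is the image of the simplified
golden-mean tree-shift under the sliding block code induced by the 2-block map
Φ with Φ(0,0,0) = 0 and Φ(u) = 1 otherwise (so φ(t)(x) = t(x) ∨ t(x0) ∨ t(x1));
hence it is a sofic tree-shift. -/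
theorem stmt17 :
    (fun t : ITree Bool =>
        (fun x : Word => t x || t (x ++ [false]) || t (x ++ [true]))) ''
      treeShiftOf goldenF = evenShift := by
  apply Set.eq_of_subset_of_subset
  · rintro s ⟨t, ht, rfl⟩
    have hgm : GM t := (memX_iff t).1 ht
    show phi t ∈ evenShift
    rw [mem_evenShift]
    exact ⟨fun x m hm h0 h1 hmid => run_even t hgm x m hm h0 h1 hmid,
      fun x m1 m2 h1 h2 => phi_cond2 t hgm x m1 m2 h1 h2⟩
  · intro s hs
    rw [mem_evenShift] at hs
    obtain ⟨hs1, hs2⟩ := hs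
    refine ⟨preT s, ?_, ?_⟩
    · rw [memX_iff]
      intro x
      exact (preT_GM s) x
    · show phi (preT s) = s
      exact phi_preT s hs2
end
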